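/- Let β₀ < α_k < β_k be real numbers with α_k - β₀ > β_k - α_k, and let x ∈ (α_k, β_k). Then ∫_{β₀}^{α_k} dt/√((t-β₀)(α_k-t)(β_k-t)) ≤ (2/√(x-β₀))·(2 + log 2 + log((β_k-β₀)/(β_k-α_k))). -/

import Mathlib

open Real MeasureTheory intervalIntegral Set

lemma sqrt_add_sqrt_le {x y : ℝ} (hx : 0 ≤ x) (hy : 0 ≤ y) :
    Real.sqrt x + Real.sqrt y ≤ Real.sqrt (2 * (x + y)) := by
  have h1 := Real.sq_sqrt hx
  have h2 := Real.sq_sqrt hy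
  have key : (Real.sqrt x + Real.sqrt y) ^ 2 ≤ 2 * (x + y) := by
    nlinarith [sq_nonneg (Real.sqrt x - Real.sqrt y)]
  calc Real.sqrt x + Real.sqrt y
      = Real.sqrt ((Real.sqrt x + Real.sqrt y) ^ 2) := (Real.sqrt_sq (by positivity)).symm
    _ ≤ Real.sqrt (2 * (x + y)) := Real.sqrt_le_sqrt key

lemma one_div_sqrt_eq {t : ℝ} (ht : 0 ≤ t) : 1 / Real.sqrt t = t ^ (-(1/2) : ℝ) := by
  rw [Real.rpow_neg ht, ← Real.sqrt_eq_rpow, one_div]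

lemma intInt_one_div_sqrt {c : ℝ} (hc : 0 ≤ c) :
    IntervalIntegrable (fun t => 1 / Real.sqrt t) volume 0 c := by
  have h := intervalIntegrable_rpow' (a := 0) (b := c) (r := -(1/2)) (by norm_num)
  rw [intervalIntegrable_iff] at h ⊢
  exact h.congr_fun (fun t ht => by
    rw [Set.uIoc_of_le hc] at ht
    exact (one_div_sqrt_eq ht.1.le).symm) measurableSet_uIoc

lemma integral_one_div_sqrt {c : ℝ} (hc : 0 ≤ c) :
    ∫ t in (0:ℝ)..c, 1 / Real.sqrt t = 2 * Real.sqrt c := by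
  rw [intervalIntegral.integral_congr (g := fun t => t ^ (-(1/2) : ℝ))
    (fun t ht => by
      rw [Set.uIcc_of_le hc] at ht
      exact one_div_sqrt_eq ht.1)]
  rw [integral_rpow (Or.inl (by norm_num))]
  rw [Real.sqrt_eq_rpow]
  norm_num
  ring

lemma elliptic_core (a b : ℝ) (ha : 0 < a) (hab : a < b) :
    ∫ t in (0:ℝ)..a, 1 / Real.sqrt (t * (a - t) * (b - t)) ≤
      Real.sqrt (2 / a) * (2 + Real.log 2 + Real.log (b / (b - a))) := by
  set c : ℝ := a / 2 with hcdef
  set f : ℝ → ℝ := fun t => 1 / Real.sqrt (t * (a - t) * (b - t)) with hfdef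
  set B : ℝ := Real.sqrt (2 / a) with hBdef
  have hc0 : 0 ≤ c := by positivity
  have hca : c ≤ a := by simp [hcdef]; linarith
  have hba : 0 < b - a := by linarith
  have hB0 : 0 < B := Real.sqrt_pos.2 (by positivity)
  -- measurability of f
  have hfm : Measurable f := by
    apply Measurable.div measurable_const
    exact (Real.continuous_sqrt.comp
      ((continuous_id.mul (continuous_const.sub continuous_id)).mul
        (continuous_const.sub continuous_id))).measurable
  -- pointwise bound on [0, c]
  have hA1 : ∀ t ∈ Icc (0:ℝ) c, f t ≤ (2 / a) * (1 / Real.sqrt t) := by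
    intro t ht
    obtain ⟨ht0, htc⟩ := ht
    have hat : a / 2 ≤ a - t := by simp [hcdef] at htc; linarith
    have hbt : a / 2 ≤ b - t := by simp [hcdef] at htc; linarith
    have hsplit : Real.sqrt (t * (a - t) * (b - t))
        = Real.sqrt t * Real.sqrt ((a - t) * (b - t)) := by
      rw [mul_assoc, Real.sqrt_mul ht0]
    have hM : a / 2 ≤ Real.sqrt ((a - t) * (b - t)) := by
      have : Real.sqrt ((a/2) * (a/2)) ≤ Real.sqrt ((a - t) * (b - t)) :=
        Real.sqrt_le_sqrt (by nlinarith)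
      rwa [Real.sqrt_mul_self (by positivity)] at this
    rcases eq_or_lt_of_le ht0 with h0 | h0
    · simp [hfdef, ← h0]
    · have hst : 0 < Real.sqrt t := Real.sqrt_pos.2 h0
      rw [hfdef]
      simp only []
      rw [hsplit]
      have hpos : 0 < a / 2 * Real.sqrt t := by positivity
      have hle : a / 2 * Real.sqrt t ≤ Real.sqrt t * Real.sqrt ((a - t) * (b - t)) := by
        rw [mul_comm]
        exact mul_le_mul_of_nonneg_left hM hst.le
      calc 1 / (Real.sqrt t * Real.sqrt ((a - t) * (b - t)))
          ≤ 1 / (a / 2 * Real.sqrt t) := one_div_le_one_div_of_le hpos hle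
        _ = (2 / a) * (1 / Real.sqrt t) := by
            field_simp
  -- pointwise bound on [c, a]
  have hA2 : ∀ t ∈ Icc c a, f t ≤ B * (1 / Real.sqrt ((a - t) * (b - t))) := by
    intro t ht
    obtain ⟨htc, hta⟩ := ht
    have ht0 : 0 < t := lt_of_lt_of_le (by positivity) htc
    have hsplit : Real.sqrt (t * (a - t) * (b - t))
        = Real.sqrt t * Real.sqrt ((a - t) * (b - t)) := by
      rw [mul_assoc, Real.sqrt_mul ht0.le]
    have hB' : 1 / Real.sqrt t ≤ B := by
      rw [hBdef]
      have h1 : Real.sqrt c ≤ Real.sqrt t := Real.sqrt_le_sqrt htc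
      have hc' : 0 < Real.sqrt c := Real.sqrt_pos.2 (by positivity)
      have h2 : 1 / Real.sqrt t ≤ 1 / Real.sqrt c := by
        apply one_div_le_one_div_of_le hc' h1
      refine h2.trans_eq ?_
      rw [one_div, ← Real.sqrt_inv]
      congr 1
      rw [hcdef]
      field_simp
    rw [hfdef]
    simp only []
    rw [hsplit, ← one_div_mul_one_div]
    exact mul_le_mul hB' le_rfl (by positivity) hB0.le
  -- integrability on [0, c]
  have hg1int : IntervalIntegrable (fun t => (2 / a) * (1 / Real.sqrt t)) volume 0 c :=
    (intInt_one_div_sqrt hc0).const_mul _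
  have hi1 : IntervalIntegrable f volume 0 c := by
    apply hg1int.mono_fun hfm.aestronglyMeasurable.restrict
    rw [Filter.EventuallyLE, ae_restrict_iff' measurableSet_uIoc]
    refine ae_of_all _ fun t ht => ?_
    rw [Set.uIoc_of_le hc0] at ht
    have h := hA1 t ⟨ht.1.le, ht.2⟩
    rw [Real.norm_eq_abs, Real.norm_eq_abs, abs_of_nonneg (by positivity : (0:ℝ) ≤ f t)]
    refine h.trans (le_abs_self _)
  -- integrability of 1/√((a-t)(b-t)) on [c, a]
  have hrefl : IntervalIntegrable (fun t => 1 / Real.sqrt (a - t)) volume c a := by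
    have := (intInt_one_div_sqrt (c := a - c) (by linarith)).comp_sub_left a
    simpa using this.symm
  have hf2m : Measurable (fun t => 1 / Real.sqrt ((a - t) * (b - t))) := by
    apply Measurable.div measurable_const
    exact (Real.continuous_sqrt.comp
      ((continuous_const.sub continuous_id).mul (continuous_const.sub continuous_id))).measurable
  have hf2bound : ∀ t ∈ Icc c a,
      1 / Real.sqrt ((a - t) * (b - t)) ≤ (1 / Real.sqrt (b - a)) * (1 / Real.sqrt (a - t)) := by
    intro t ht
    have hbt : b - a ≤ b - t := by linarith [ht.2]
    have hat0 : 0 ≤ a - t := by linarith [ht.2]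
    have hsp : Real.sqrt ((a - t) * (b - t)) = Real.sqrt (a - t) * Real.sqrt (b - t) :=
      Real.sqrt_mul hat0 _
    rcases eq_or_lt_of_le hat0 with h0 | h0
    · simp [← h0]
    · have h1 : 0 < Real.sqrt (a - t) := Real.sqrt_pos.2 h0
      have h2 : 0 < Real.sqrt (b - a) := Real.sqrt_pos.2 hba
      have hle : Real.sqrt (b - a) * Real.sqrt (a - t) ≤ Real.sqrt (a - t) * Real.sqrt (b - t) := by
        rw [mul_comm]
        exact mul_le_mul_of_nonneg_left (Real.sqrt_le_sqrt hbt) h1.le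
      calc 1 / Real.sqrt ((a - t) * (b - t)) = 1 / (Real.sqrt (a - t) * Real.sqrt (b - t)) := by
            rw [hsp]
        _ ≤ 1 / (Real.sqrt (b - a) * Real.sqrt (a - t)) :=
            one_div_le_one_div_of_le (by positivity) hle
        _ = (1 / Real.sqrt (b - a)) * (1 / Real.sqrt (a - t)) := by
            rw [one_div_mul_one_div]
  have hf2int : IntervalIntegrable (fun t => 1 / Real.sqrt ((a - t) * (b - t))) volume c a := by
    apply (hrefl.const_mul (1 / Real.sqrt (b - a))).mono_fun hf2m.aestronglyMeasurable.restrict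
    rw [Filter.EventuallyLE, ae_restrict_iff' measurableSet_uIoc]
    refine ae_of_all _ fun t ht => ?_
    rw [Set.uIoc_of_le hca] at ht
    have h := hf2bound t ⟨ht.1.le, ht.2⟩
    rw [Real.norm_eq_abs, Real.norm_eq_abs,
      abs_of_nonneg (by positivity : (0:ℝ) ≤ 1 / Real.sqrt ((a - t) * (b - t)))]
    refine h.trans (le_abs_self _)
  -- integrability of f on [c, a]
  have hi2 : IntervalIntegrable f volume c a := by
    apply (hf2int.const_mul B).mono_fun hfm.aestronglyMeasurable.restrict
    rw [Filter.EventuallyLE, ae_restrict_iff' measurableSet_uIoc]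
    refine ae_of_all _ fun t ht => ?_
    rw [Set.uIoc_of_le hca] at ht
    have h := hA2 t ⟨ht.1.le, ht.2⟩
    rw [Real.norm_eq_abs, Real.norm_eq_abs, abs_of_nonneg (by positivity : (0:ℝ) ≤ f t)]
    refine h.trans (le_abs_self _)
  -- FTC on [c, a]
  set F : ℝ → ℝ := fun t => -2 * Real.log (Real.sqrt (a - t) + Real.sqrt (b - t)) with hFdef
  have hinner : Continuous (fun t : ℝ => Real.sqrt (a - t) + Real.sqrt (b - t)) :=
    ((continuous_const.sub continuous_id).sqrt).add ((continuous_const.sub continuous_id).sqrt)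
  have hne : ∀ t ∈ Icc c a, Real.sqrt (a - t) + Real.sqrt (b - t) ≠ 0 := by
    intro t ht
    have : 0 < Real.sqrt (b - t) := Real.sqrt_pos.2 (by linarith [ht.2])
    positivity
  have hFcont : ContinuousOn F (Icc c a) :=
    continuousOn_const.mul (hinner.continuousOn.log hne)
  have hderiv : ∀ t ∈ Ioo c a,
      HasDerivAt F (1 / Real.sqrt ((a - t) * (b - t))) t := by
    intro t ht
    have hat : 0 < a - t := by linarith [ht.2]
    have hbt : 0 < b - t := by linarith [ht.2]
    have hu : 0 < Real.sqrt (a - t) := Real.sqrt_pos.2 hat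
    have hv : 0 < Real.sqrt (b - t) := Real.sqrt_pos.2 hbt
    have h1 : HasDerivAt (fun u : ℝ => a - u) (-1) t := (hasDerivAt_id t).const_sub a
    have h2 : HasDerivAt (fun u : ℝ => b - u) (-1) t := (hasDerivAt_id t).const_sub b
    have h1s := h1.sqrt hat.ne'
    have h2s := h2.sqrt hbt.ne'
    have hsum := h1s.add h2s
    have hne' : Real.sqrt (a - t) + Real.sqrt (b - t) ≠ 0 := by positivity
    have hF := (hsum.log hne').const_mul (-2 : ℝ)
    refine hF.congr_deriv ?_
    show -2 * ((-1 / (2 * √(a - t)) + -1 / (2 * √(b - t))) / (√(a - t) + √(b - t))) = 1 / √((a - t) * (b - t))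
    rw [Real.sqrt_mul hat.le]
    field_simp
    ring
  have hc2 : ∫ t in c..a, 1 / Real.sqrt ((a - t) * (b - t)) = F a - F c :=
    integral_eq_sub_of_hasDerivAt_of_le hca hFcont hderiv hf2int
  -- bound F a - F c
  have hc3 : F a - F c ≤ Real.log 2 + Real.log (b / (b - a)) := by
    have hFa : F a = -Real.log (b - a) := by
      rw [hFdef]
      simp only [sub_self, Real.sqrt_zero, zero_add]
      rw [Real.log_sqrt hba.le]
      ring
    have hS : Real.sqrt (a - c) + Real.sqrt (b - c) ≤ Real.sqrt (2 * b) := by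
      have h := sqrt_add_sqrt_le (x := a - c) (y := b - c) (by linarith) (by linarith)
      rwa [show 2 * ((a - c) + (b - c)) = 2 * b by rw [hcdef]; ring] at h
    have hSpos : 0 < Real.sqrt (a - c) + Real.sqrt (b - c) := by
      have : 0 < Real.sqrt (b - c) := Real.sqrt_pos.2 (by linarith)
      positivity
    have hlog : Real.log (Real.sqrt (a - c) + Real.sqrt (b - c)) ≤ Real.log (Real.sqrt (2 * b)) :=
      Real.log_le_log hSpos hS
    have hlogsqrt : Real.log (Real.sqrt (2 * b)) = Real.log (2 * b) / 2 :=
      Real.log_sqrt (by linarith)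
    have hlogmul : Real.log (2 * b) = Real.log 2 + Real.log b :=
      Real.log_mul two_ne_zero (by linarith : (0:ℝ) < b).ne'
    have hlogdiv : Real.log (b / (b - a)) = Real.log b - Real.log (b - a) :=
      Real.log_div (by linarith : (0:ℝ) < b).ne' hba.ne'
    have hFc : F c = -2 * Real.log (Real.sqrt (a - c) + Real.sqrt (b - c)) := rfl
    rw [hFa, hFc, hlogdiv]
    nlinarith [hlog, hlogsqrt, hlogmul]
  -- combine
  have hsplit_int : ∫ t in (0:ℝ)..a, f t = (∫ t in (0:ℝ)..c, f t) + ∫ t in c..a, f t :=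
    (integral_add_adjacent_intervals hi1 hi2).symm
  have hIc1 : ∫ t in (0:ℝ)..c, f t ≤ 2 * B := by
    have h1 : ∫ t in (0:ℝ)..c, f t ≤ ∫ t in (0:ℝ)..c, (2 / a) * (1 / Real.sqrt t) :=
      integral_mono_on hc0 hi1 hg1int hA1
    have h2 : ∫ t in (0:ℝ)..c, (2 / a) * (1 / Real.sqrt t) = (2 / a) * (2 * Real.sqrt c) := by
      rw [intervalIntegral.integral_const_mul, integral_one_div_sqrt hc0]
    have hprod : Real.sqrt (a / 2) * Real.sqrt (2 / a) = 1 := by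
      rw [← Real.sqrt_mul (by positivity), show (a / 2) * (2 / a) = 1 by field_simp]
      exact Real.sqrt_one
    have key : (2 / a) * (2 * Real.sqrt (a / 2)) * Real.sqrt (2 / a)
        = (2 * Real.sqrt (2 / a)) * Real.sqrt (2 / a) := by
      rw [show (2 / a) * (2 * Real.sqrt (a / 2)) * Real.sqrt (2 / a)
          = (2 / a) * 2 * (Real.sqrt (a / 2) * Real.sqrt (2 / a)) by ring, hprod]
      rw [show (2 * Real.sqrt (2 / a)) * Real.sqrt (2 / a)
          = 2 * (Real.sqrt (2 / a) * Real.sqrt (2 / a)) by ring,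
        Real.mul_self_sqrt (by positivity)]
      field_simp
    have h3 : (2 / a) * (2 * Real.sqrt (a / 2)) = 2 * B := by
      rw [hBdef]
      exact mul_right_cancel₀ hB0.ne' key
    rw [h2] at h1
    rw [hcdef] at h1
    linarith [h1, h3]
  have hIc2 : ∫ t in c..a, f t ≤ B * (Real.log 2 + Real.log (b / (b - a))) := by
    have h1 : ∫ t in c..a, f t ≤ ∫ t in c..a, B * (1 / Real.sqrt ((a - t) * (b - t))) :=
      integral_mono_on hca hi2 (hf2int.const_mul B) hA2
    have h2 : ∫ t in c..a, B * (1 / Real.sqrt ((a - t) * (b - t))) = B * (F a - F c) := by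
      rw [intervalIntegral.integral_const_mul, hc2]
    have h3 : B * (F a - F c) ≤ B * (Real.log 2 + Real.log (b / (b - a))) :=
      mul_le_mul_of_nonneg_left hc3 hB0.le
    linarith [h1, h2.le, h2.ge, h3]
  calc ∫ t in (0:ℝ)..a, f t = (∫ t in (0:ℝ)..c, f t) + ∫ t in c..a, f t := hsplit_int
    _ ≤ 2 * B + B * (Real.log 2 + Real.log (b / (b - a))) := add_le_add hIc1 hIc2
    _ = B * (2 + Real.log 2 + Real.log (b / (b - a))) := by ring

/-- Elliptic-type integral estimate: if `β₀ < αk < βk` with `αk - β₀ > βk - αk`, then for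
`x ∈ (αk, βk)`, `∫_{β₀}^{αk} dt/√((t-β₀)(αk-t)(βk-t))
  ≤ (2/√(x-β₀))·(2 + log 2 + log((βk-β₀)/(βk-αk)))`. -/
theorem elliptic_integral_estimate_long_band (β₀ αk βk x : ℝ)
    (h1 : β₀ < αk) (h2 : αk < βk) (h3 : βk - αk < αk - β₀)
    (hx : x ∈ Set.Ioo αk βk) :
    ∫ t in β₀..αk, 1 / Real.sqrt ((t - β₀) * (αk - t) * (βk - t)) ≤
      (2 / Real.sqrt (x - β₀)) * (2 + Real.log 2 + Real.log ((βk - β₀) / (βk - αk))) := by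
  obtain ⟨hx1, hx2⟩ := hx
  set a : ℝ := αk - β₀ with haD
  set b : ℝ := βk - β₀ with hbD
  have ha : 0 < a := by rw [haD]; linarith
  have hab : a < b := by rw [haD, hbD]; linarith
  have hba : βk - αk = b - a := by rw [haD, hbD]; ring
  rw [hba]
  have hshift : (∫ t in β₀..αk, 1 / Real.sqrt ((t - β₀) * (αk - t) * (βk - t)))
      = ∫ u in (0:ℝ)..a, 1 / Real.sqrt (u * (a - u) * (b - u)) := by
    have h := intervalIntegral.integral_comp_sub_right
      (a := β₀) (b := αk) (fun u => 1 / Real.sqrt (u * (a - u) * (b - u))) β₀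
    rw [sub_self] at h
    rw [← h]
    apply intervalIntegral.integral_congr
    intro t _
    simp only []
    rw [show (t - β₀) * (a - (t - β₀)) * (b - (t - β₀))
        = (t - β₀) * (αk - t) * (βk - t) by rw [haD, hbD]; ring]
  rw [hshift]
  have hcore := elliptic_core a b ha hab
  have hK0 : 0 ≤ 2 + Real.log 2 + Real.log (b / (b - a)) := by
    have hl2 : 0 < Real.log 2 := Real.log_pos one_lt_two
    have hlr : 0 < Real.log (b / (b - a)) := by
      apply Real.log_pos
      rw [lt_div_iff₀ (by linarith)]
      linarith
    linarith
  have hBle : Real.sqrt (2 / a) ≤ 2 / Real.sqrt (x - β₀) := by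
    have hx0 : 0 < x - β₀ := by linarith
    have hx2a : x - β₀ ≤ 2 * a := by rw [haD]; linarith
    have hsq1 : Real.sqrt (x - β₀) ≤ Real.sqrt (2 * a) := Real.sqrt_le_sqrt hx2a
    have hp : Real.sqrt (2 * a) * Real.sqrt (2 / a) = 2 := by
      rw [← Real.sqrt_mul (by positivity), show (2 * a) * (2 / a) = 4 by field_simp; ring]
      rw [show (4:ℝ) = 2 ^ 2 by norm_num, Real.sqrt_sq (by norm_num)]
    have h2eq : Real.sqrt (2 / a) = 2 / Real.sqrt (2 * a) := by
      rw [eq_div_iff (ne_of_gt (Real.sqrt_pos.2 (by positivity)))]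
      rw [mul_comm]
      exact hp
    rw [h2eq]
    gcongr
  calc ∫ u in (0:ℝ)..a, 1 / Real.sqrt (u * (a - u) * (b - u))
      ≤ Real.sqrt (2 / a) * (2 + Real.log 2 + Real.log (b / (b - a))) := hcore
    _ ≤ (2 / Real.sqrt (x - β₀)) * (2 + Real.log 2 + Real.log (b / (b - a))) :=
        mul_le_mul_of_nonneg_right hBle hK0
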